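/- For θ ∈ (0,1] and complex s with Re(s) > 1, the Mellin transform of f_θ satisfies ∫₀¹ f_θ(x)·x^{s−1} dx = (ζ(s)/s)·(θ − θ^s), where ζ is the Riemann zeta function. -/

import Mathlib

open MeasureTheory

noncomputable def fBN (θ : ℝ) (x : ℝ) : ℝ := Int.fract (θ / x) - θ * Int.fract (1 / x)

section aux

open Set

lemma cpow_cont {s : ℂ} (hs : 1 < s.re) :
    Continuous fun x : ℝ => (x:ℂ) ^ (s - 1) :=
  Complex.continuous_ofReal_cpow_const (by simp; linarith)

lemma base_int {s : ℂ} (hs : 1 < s.re) :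
    IntegrableOn (fun x : ℝ => (x:ℂ) ^ (s - 1)) (Set.Ioc (0:ℝ) 1) :=
  (intervalIntegrable_iff_integrableOn_Ioc_of_le (by norm_num : (0:ℝ) ≤ 1)).mp
    (intervalIntegral.intervalIntegrable_cpow' (by simp; linarith))

lemma base_int2 {s : ℂ} (hs : 1 < s.re) :
    IntegrableOn (fun x : ℝ => (x:ℂ) ^ (s - 2)) (Set.Ioc (0:ℝ) 1) :=
  (intervalIntegrable_iff_integrableOn_Ioc_of_le (by norm_num : (0:ℝ) ≤ 1)).mp
    (intervalIntegral.intervalIntegrable_cpow' (by simp; linarith))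

lemma fract_int (θ : ℝ) {s : ℂ} (hs : 1 < s.re) :
    IntegrableOn (fun x : ℝ => ((Int.fract (θ / x) : ℝ) : ℂ) * (x:ℂ) ^ (s - 1))
      (Set.Ioc (0:ℝ) 1) := by
  refine Integrable.mono (base_int hs) ?_ ?_
  · refine AEStronglyMeasurable.mul ?_ (cpow_cont hs).aestronglyMeasurable.restrict
    exact (Complex.measurable_ofReal.comp
      (measurable_fract.comp (measurable_const.div measurable_id))).aestronglyMeasurable
  · refine Filter.Eventually.of_forall fun x => ?_
    rw [norm_mul]
    have h1 : ‖((Int.fract (θ / x) : ℝ) : ℂ)‖ ≤ 1 := by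
      rw [Complex.norm_real, Real.norm_eq_abs, abs_of_nonneg (Int.fract_nonneg _)]
      exact le_of_lt (Int.fract_lt_one _)
    calc ‖((Int.fract (θ / x) : ℝ) : ℂ)‖ * ‖(x:ℂ) ^ (s-1)‖
        ≤ 1 * ‖(x:ℂ) ^ (s-1)‖ := mul_le_mul_of_nonneg_right h1 (norm_nonneg _)
      _ = ‖(x:ℂ) ^ (s-1)‖ := one_mul _

/-- value of `∫ x in Ioc 0 c, (x:ℂ)^(s-1)` for `0 < c`. -/
lemma cpow_integral_Ioc {s : ℂ} (hs : 0 < s.re) {c : ℝ} (hc : 0 < c) :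
    ∫ x in Set.Ioc (0:ℝ) c, (x:ℂ) ^ (s - 1) = (c:ℂ) ^ s / s := by
  have hs0 : s ≠ 0 := fun h => by simp [h] at hs
  rw [← intervalIntegral.integral_of_le hc.le,
    integral_cpow (Or.inl (by simp; linarith))]
  simp only [sub_add_cancel]
  rw [Complex.ofReal_zero, Complex.zero_cpow hs0, sub_zero]

lemma floor_tsum (θ : ℝ) (hθ0 : 0 < θ) {s : ℂ} {x : ℝ} (hx : 0 < x) :
    ∑' n : ℕ, (Set.Ioc (0:ℝ) (θ / (n+1))).indicator
        (fun y : ℝ => (y:ℂ) ^ (s - 1)) x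
      = ((⌊θ / x⌋₊ : ℕ) : ℂ) * (x:ℂ) ^ (s - 1) := by
  set N := ⌊θ / x⌋₊ with hN
  have hdx : 0 ≤ θ / x := le_of_lt (div_pos hθ0 hx)
  have key : ∀ n : ℕ, (Set.Ioc (0:ℝ) (θ / (n+1))).indicator
      (fun y : ℝ => (y:ℂ) ^ (s - 1)) x
      = if n < N then (x:ℂ) ^ (s - 1) else 0 := by
    intro n
    have hn1 : (0:ℝ) < (n:ℝ) + 1 := by positivity
    have h4 : x ≤ θ / ((n:ℝ)+1) ↔ ((n:ℝ)+1) ≤ θ / x := by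
      rw [le_div_iff₀ hn1, le_div_iff₀ hx, mul_comm]
    have hmem : x ∈ Set.Ioc (0:ℝ) (θ / ((n:ℝ)+1)) ↔ n < N := by
      constructor
      · rintro ⟨-, hle⟩
        have h2 : n + 1 ≤ N := Nat.le_floor (by push_cast; exact h4.mp hle)
        omega
      · intro hlt
        refine ⟨hx, h4.mpr ?_⟩
        have h3 : ((n:ℝ)+1) ≤ (N:ℝ) := by exact_mod_cast Nat.succ_le_of_lt hlt
        exact h3.trans (Nat.floor_le hdx)
    by_cases h : n < N
    · rw [if_pos h, Set.indicator_of_mem (hmem.mpr h)]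
    · rw [if_neg h, Set.indicator_of_notMem (fun hm => h (hmem.mp hm))]
  rw [tsum_congr key]
  rw [tsum_eq_sum (s := Finset.range N)
    (fun n hn => by rw [if_neg (by simpa using hn)])]
  rw [Finset.sum_congr rfl (fun n hn => if_pos (Finset.mem_range.mp hn))]
  simp [Finset.sum_const, nsmul_eq_mul]

lemma key_integral (θ : ℝ) (hθ0 : 0 < θ) (hθ1 : θ ≤ 1) {s : ℂ} (hs : 1 < s.re) :
    ∫ x in Set.Ioc (0:ℝ) 1, ((Int.fract (θ / x) : ℝ) : ℂ) * (x:ℂ) ^ (s - 1)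
      = (θ:ℂ) / (s - 1) - (θ:ℂ) ^ s * (riemannZeta s / s) := by
  have hs0 : s ≠ 0 := fun h => by simp [h] at hs; linarith
  set F : ℕ → ℝ → ℂ := fun n => (Set.Ioc (0:ℝ) (θ / (n+1))).indicator
      (fun y : ℝ => (y:ℂ) ^ (s - 1)) with hF
  have hsub : ∀ n : ℕ, Set.Ioc (0:ℝ) (θ / (n+1)) ⊆ Set.Ioc (0:ℝ) 1 := by
    intro n
    apply Set.Ioc_subset_Ioc_right
    exact (div_le_self hθ0.le (by linarith [Nat.cast_nonneg (α := ℝ) n])).trans hθ1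
  -- integrability of each F n on restricted measure
  have hFint : ∀ n : ℕ, Integrable (F n) (volume.restrict (Set.Ioc (0:ℝ) 1)) := by
    intro n
    rw [hF, integrable_indicator_iff measurableSet_Ioc]
    rw [IntegrableOn, Measure.restrict_restrict measurableSet_Ioc]
    exact (base_int hs).mono_set Set.inter_subset_right
  -- value of each integral
  have hcpos : ∀ n : ℕ, 0 < θ / ((n:ℝ)+1) := fun n => div_pos hθ0 (by positivity)
  have hFval : ∀ n : ℕ, ∫ x, F n x ∂(volume.restrict (Set.Ioc (0:ℝ) 1))
      = ((θ / ((n:ℝ)+1) : ℝ) : ℂ) ^ s / s := by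
    intro n
    rw [hF, integral_indicator measurableSet_Ioc,
      Measure.restrict_restrict measurableSet_Ioc,
      Set.inter_eq_left.mpr (hsub n)]
    exact cpow_integral_Ioc (by linarith) (hcpos n)
  -- norms
  have hnormval : ∀ n : ℕ,
      ∫ x, ‖F n x‖ ∂(volume.restrict (Set.Ioc (0:ℝ) 1))
        = (θ / ((n:ℝ)+1)) ^ s.re / s.re := by
    intro n
    have hfn : (fun x => ‖F n x‖)
        = (Set.Ioc (0:ℝ) (θ / (n+1))).indicator
            (fun y : ℝ => ‖(y:ℂ) ^ (s - 1)‖) := by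
      funext x
      rw [hF]
      exact norm_indicator_eq_indicator_norm _ _
    rw [hfn, integral_indicator measurableSet_Ioc,
      Measure.restrict_restrict measurableSet_Ioc,
      Set.inter_eq_left.mpr (hsub n)]
    have heq : Set.EqOn (fun y : ℝ => ‖(y:ℂ) ^ (s - 1)‖)
        (fun y : ℝ => y ^ (s.re - 1)) (Set.Ioc (0:ℝ) (θ/(n+1))) := by
      intro y hy
      simp only
      rw [Complex.norm_cpow_eq_rpow_re_of_pos hy.1]
      norm_num
    rw [setIntegral_congr_fun measurableSet_Ioc heq,
      ← intervalIntegral.integral_of_le (hcpos n).le,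
      integral_rpow (Or.inl (by linarith))]
    rw [sub_add_cancel, Real.zero_rpow (by linarith), sub_zero]
  -- summability of integrals of norms
  have hsummable : Summable fun n : ℕ => (θ / ((n:ℝ)+1)) ^ s.re / s.re := by
    have h0 := (Real.summable_nat_rpow (p := -s.re)).mpr (by linarith)
    have h2 := (summable_nat_add_iff 1).mpr h0
    have h1 : Summable fun n : ℕ => ((n:ℝ)+1) ^ (-s.re) :=
      h2.congr fun n => by rw [Nat.cast_add_one]
    refine ((h1.mul_left (θ ^ s.re)).div_const s.re).congr fun n => ?_
    rw [Real.div_rpow hθ0.le (by positivity), Real.rpow_neg (by positivity)]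
    ring
  have hsum2 : Summable fun n : ℕ =>
      ∫ x, ‖F n x‖ ∂(volume.restrict (Set.Ioc (0:ℝ) 1)) :=
    hsummable.congr fun n => (hnormval n).symm
  -- interchange
  have hinter := integral_tsum_of_summable_integral_norm hFint hsum2
  -- pointwise identity on Ioc 0 1
  have hpt : Set.EqOn (fun x : ℝ => ∑' n : ℕ, F n x)
      (fun x : ℝ => ((⌊θ / x⌋₊ : ℕ) : ℂ) * (x:ℂ) ^ (s - 1)) (Set.Ioc (0:ℝ) 1) := by
    intro x hx
    exact floor_tsum θ hθ0 hx.1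
  have hfloor : ∫ x in Set.Ioc (0:ℝ) 1, ((⌊θ / x⌋₊ : ℕ) : ℂ) * (x:ℂ) ^ (s - 1)
      = ∑' n : ℕ, ((θ / ((n:ℝ)+1) : ℝ) : ℂ) ^ s / s := by
    rw [← setIntegral_congr_fun measurableSet_Ioc hpt, ← hinter]
    exact tsum_congr hFval
  -- evaluate the tsum
  have harg : ∀ n : ℕ, ((((n:ℝ)+1 : ℝ))⁻¹ : ℂ).arg ≠ Real.pi := by
    intro n
    rw [show ((((n:ℝ)+1 : ℝ))⁻¹ : ℂ) = ((((n:ℝ)+1)⁻¹ : ℝ) : ℂ) by push_cast; ring]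
    rw [Complex.arg_ofReal_of_nonneg (by positivity)]
    exact Real.pi_ne_zero.symm
  have htsum : ∑' n : ℕ, ((θ / ((n:ℝ)+1) : ℝ) : ℂ) ^ s / s
      = (θ:ℂ) ^ s * (riemannZeta s / s) := by
    have hterm : ∀ n : ℕ, ((θ / ((n:ℝ)+1) : ℝ) : ℂ) ^ s / s
        = ((θ:ℂ) ^ s / s) * (1 / ((n:ℂ) + 1) ^ s) := by
      intro n
      have h1 : (θ / ((n:ℝ)+1) : ℝ) = θ * (((n:ℝ)+1))⁻¹ := by ring
      rw [h1, Complex.ofReal_mul,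
        Complex.mul_cpow_ofReal_nonneg hθ0.le (by positivity),
        Complex.ofReal_inv, Complex.inv_cpow _ _ (by
          rw [Complex.arg_ofReal_of_nonneg (by positivity)]
          exact Real.pi_ne_zero.symm)]
      push_cast
      ring
    rw [tsum_congr hterm, tsum_mul_left, ← zeta_eq_tsum_one_div_nat_add_one_cpow hs]
    ring
  -- split fract
  have hsplit : Set.EqOn
      (fun x : ℝ => ((Int.fract (θ / x) : ℝ) : ℂ) * (x:ℂ) ^ (s - 1))
      (fun x : ℝ => (θ:ℂ) * (x:ℂ) ^ (s - 2)
        - ((⌊θ / x⌋₊ : ℕ) : ℂ) * (x:ℂ) ^ (s - 1)) (Set.Ioc (0:ℝ) 1) := by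
    intro x hx
    have hx0 : 0 < x := hx.1
    have hxne : (x:ℂ) ≠ 0 := by exact_mod_cast hx0.ne'
    have hfr : (Int.fract (θ / x) : ℝ) = θ / x - ((⌊θ / x⌋₊ : ℕ) : ℝ) := by
      rw [natCast_floor_eq_intCast_floor (le_of_lt (div_pos hθ0 hx0))]
      exact (Int.self_sub_floor _).symm
    have hc2 : (x:ℂ) ^ (s - 2) = (x:ℂ) ^ (s - 1) / x := by
      rw [show s - 2 = (s - 1) - 1 by ring, Complex.cpow_sub _ _ hxne, Complex.cpow_one]
    simp only
    rw [hfr, hc2]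
    push_cast
    field_simp
  have hA : ∫ x in Set.Ioc (0:ℝ) 1, (θ:ℂ) * (x:ℂ) ^ (s - 2) = (θ:ℂ) / (s - 1) := by
    rw [integral_const_mul]
    have h1 : ∫ x in Set.Ioc (0:ℝ) 1, (x:ℂ) ^ (s - 2)
        = ((1:ℝ):ℂ) ^ (s-1) / (s-1) := by
      have h2 := cpow_integral_Ioc (s := s - 1) (by simp; linarith) one_pos
      simpa [show s - 1 - 1 = s - 2 by ring] using h2
    rw [h1, Complex.ofReal_one, Complex.one_cpow, mul_one_div]
  have heq2 : Set.EqOn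
      (fun x : ℝ => ((⌊θ / x⌋₊ : ℕ) : ℂ) * (x:ℂ) ^ (s - 1))
      (fun x : ℝ => (θ:ℂ) * (x:ℂ) ^ (s - 2)
        - ((Int.fract (θ / x) : ℝ) : ℂ) * (x:ℂ) ^ (s - 1)) (Set.Ioc (0:ℝ) 1) := by
    intro x hx
    have h := hsplit hx
    simp only at h ⊢
    linear_combination h
  have hfl2 : ∫ x in Set.Ioc (0:ℝ) 1, ((⌊θ / x⌋₊ : ℕ) : ℂ) * (x:ℂ) ^ (s - 1)
      = (θ:ℂ) / (s - 1)
        - ∫ x in Set.Ioc (0:ℝ) 1, ((Int.fract (θ / x) : ℝ) : ℂ) * (x:ℂ) ^ (s - 1) := by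
    rw [setIntegral_congr_fun measurableSet_Ioc heq2,
      integral_sub ((base_int2 hs).const_mul _) (fract_int θ hs), hA]
  linear_combination hfl2 - hfloor - htsum

end aux

theorem stmt_5 (θ : ℝ) (hθ : θ ∈ Set.Ioc (0:ℝ) 1) (s : ℂ) (hs : 1 < s.re) :
    ∫ x in Set.Ioc (0:ℝ) 1, (fBN θ x : ℂ) * (x:ℂ) ^ (s - 1)
      = riemannZeta s / s * ((θ:ℂ) - (θ:ℂ) ^ s) := by
  obtain ⟨hθ0, hθ1⟩ := hθ
  have h1 := key_integral θ hθ0 hθ1 hs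
  have h2 := key_integral 1 one_pos le_rfl hs
  have heq : Set.EqOn (fun x : ℝ => (fBN θ x : ℂ) * (x:ℂ) ^ (s-1))
      (fun x : ℝ => ((Int.fract (θ/x) : ℝ) : ℂ) * (x:ℂ) ^ (s-1)
        - (θ:ℂ) * (((Int.fract (1/x) : ℝ) : ℂ) * (x:ℂ) ^ (s-1))) (Set.Ioc (0:ℝ) 1) := by
    intro x hx
    simp only [fBN]
    push_cast
    ring
  rw [setIntegral_congr_fun measurableSet_Ioc heq,
    integral_sub (fract_int θ hs) ((fract_int 1 hs).const_mul _),
    integral_const_mul, h1, h2]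
  simp only [Complex.ofReal_one, Complex.one_cpow]
  ring
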